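/- For every morphism f : P → Q, one has Σ_{i=1}^{s} x^i ⊗ (f ∘ x_i) = Σ_{j=1}^{t} (y^j ∘ f) ⊗ y_j in the tensor product Hom(P,I) ⊗_k Hom(I,Q) of hom-spaces. -/

import Mathlib

open CategoryTheory TensorProduct

lemma expand_left
    {k : Type*} [Field k] {C : Type*} [Category C] [Preadditive C] [Linear k C]
    {I Q : C} (tQ : (Q ⟶ Q) →ₗ[k] k)
    {t : ℕ}
    (y : Module.Basis (Fin t) k (I ⟶ Q)) (yd : Module.Basis (Fin t) k (Q ⟶ I))
    (hy : ∀ i j : Fin t, tQ (yd j ≫ y i) = if i = j then 1 else 0)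
    (a : I ⟶ Q) :
    a = ∑ j : Fin t, tQ (yd j ≫ a) • y j := by
  conv_lhs => rw [← y.sum_repr a]
  refine Finset.sum_congr rfl fun j _ => ?_
  congr 1
  conv_rhs => rw [← y.sum_repr a]
  simp [Preadditive.comp_sum, Linear.comp_smul, hy, mul_comm, -Module.Basis.sum_repr]

lemma expand_right
    {k : Type*} [Field k] {C : Type*} [Category C] [Preadditive C] [Linear k C]
    {I P : C} (tP : (P ⟶ P) →ₗ[k] k)
    {s : ℕ}
    (x : Module.Basis (Fin s) k (I ⟶ P)) (xd : Module.Basis (Fin s) k (P ⟶ I))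
    (hx : ∀ i j : Fin s, tP (xd j ≫ x i) = if i = j then 1 else 0)
    (b : P ⟶ I) :
    b = ∑ i : Fin s, tP (b ≫ x i) • xd i := by
  conv_lhs => rw [← xd.sum_repr b]
  refine Finset.sum_congr rfl fun i _ => ?_
  congr 1
  conv_rhs => rw [← xd.sum_repr b]
  simp [Preadditive.sum_comp, Linear.smul_comp, hx, eq_comm (a := i), mul_comm, -Module.Basis.sum_repr]

/-- **Naturality of the copairing associated to a cyclic trace.**
In a `k`-linear category `𝒞`, given objects `I, P, Q`, linear functionals
`tP : End P → k`, `tQ : End Q → k` satisfying the cyclicity property, and dual bases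
`x_i : I ⟶ P`, `xᵢ* : P ⟶ I` (resp. `y_j : I ⟶ Q`, `yⱼ* : Q ⟶ I`) with respect to `tP`
(resp. `tQ`), then for every morphism `f : P ⟶ Q` one has
`Σᵢ xᵢ* ⊗ (f ∘ x_i) = Σⱼ (yⱼ* ∘ f) ⊗ y_j` in `Hom(P,I) ⊗[k] Hom(I,Q)`. -/
theorem copairing_naturality
    {k : Type*} [Field k] {C : Type*} [Category C] [Preadditive C] [Linear k C]
    (I P Q : C)
    (tP : (P ⟶ P) →ₗ[k] k) (tQ : (Q ⟶ Q) →ₗ[k] k)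
    (hcyc : ∀ (v : P ⟶ Q) (u : Q ⟶ P), tQ (u ≫ v) = tP (v ≫ u))
    {s t : ℕ}
    (x : Module.Basis (Fin s) k (I ⟶ P)) (xd : Module.Basis (Fin s) k (P ⟶ I))
    (hx : ∀ i j : Fin s, tP (xd j ≫ x i) = if i = j then 1 else 0)
    (y : Module.Basis (Fin t) k (I ⟶ Q)) (yd : Module.Basis (Fin t) k (Q ⟶ I))
    (hy : ∀ i j : Fin t, tQ (yd j ≫ y i) = if i = j then 1 else 0)
    (f : P ⟶ Q) :
    (∑ i : Fin s, xd i ⊗ₜ[k] (x i ≫ f)) =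
      (∑ j : Fin t, (f ≫ yd j) ⊗ₜ[k] y j) := by
  have L : ∀ i : Fin s, xd i ⊗ₜ[k] (x i ≫ f)
      = ∑ j : Fin t, tQ (yd j ≫ (x i ≫ f)) • (xd i ⊗ₜ[k] y j) := by
    intro i
    conv_lhs => rw [expand_left tQ y yd hy (x i ≫ f), TensorProduct.tmul_sum]
    simp [TensorProduct.tmul_smul]
  have R : ∀ j : Fin t, (f ≫ yd j) ⊗ₜ[k] y j
      = ∑ i : Fin s, tP ((f ≫ yd j) ≫ x i) • (xd i ⊗ₜ[k] y j) := by
    intro j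
    conv_lhs => rw [expand_right tP x xd hx (f ≫ yd j), TensorProduct.sum_tmul]
    simp [TensorProduct.smul_tmul]
  simp only [L, R]
  rw [Finset.sum_comm]
  refine Finset.sum_congr rfl fun j _ => Finset.sum_congr rfl fun i _ => ?_
  congr 1
  rw [← Category.assoc (yd j), hcyc f (yd j ≫ x i), Category.assoc]
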